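/- For every convex body K ⊆ ℝ^d (d ≥ 2), the function f_K is convex and is 1-Lipschitz with respect to the ℓ¹-norm: |f_K(y) − f_K(y′)| ≤ Σ_{j=1}^{d−1} |y_j − y′_j| for all y, y′ ∈ ℝ^{d−1}. -/

import Mathlib

open MeasureTheory Metric Set
open scoped RealInnerProductSpace ENNReal

noncomputable section

/-- Vertical projection `ℝ^d = ℝ^{d-1} × ℝ → ℝ^{d-1}` (forget the last coordinate). -/
def vproj (n : ℕ) (x : EuclideanSpace ℝ (Fin (n + 1))) : EuclideanSpace ℝ (Fin n) :=
  WithLp.toLp 2 (fun j => x j.castSucc)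

/-- Lift `y ∈ ℝ^{d-1}` and `t ∈ ℝ` to the point `(y, t) ∈ ℝ^d`. -/
def vlift (n : ℕ) (y : EuclideanSpace ℝ (Fin n)) (t : ℝ) : EuclideanSpace ℝ (Fin (n + 1)) :=
  WithLp.toLp 2 (fun i => if h : (i : ℕ) < n then y ⟨i, h⟩ else t)

/-- The last standard basis vector `e_d` of `ℝ^d`. -/
def ed (n : ℕ) : EuclideanSpace ℝ (Fin (n + 1)) := EuclideanSpace.single (Fin.last n) 1

/-- Support function of a set. -/
def suppFn {d : ℕ} (K : Set (EuclideanSpace ℝ (Fin d)))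
    (u : EuclideanSpace ℝ (Fin d)) : ℝ :=
  sSup ((fun x => ⟪u, x⟫) '' K)

/-- Unit vectors `u` with `-u_d ≥ |u_j|` for all `j ≤ d-1` (downward-dominated directions). -/
def downDirs (n : ℕ) : Set (EuclideanSpace ℝ (Fin (n + 1))) :=
  {u | ‖u‖ = 1 ∧ ∀ j : Fin n, |u j.castSucc| ≤ -u (Fin.last n)}

/-- The (downward) support set `S(K)`: intersection of the supporting halfspaces of `K`
with downward-dominated normals. -/
def SK {n : ℕ} (K : Set (EuclideanSpace ℝ (Fin (n + 1)))) :
    Set (EuclideanSpace ℝ (Fin (n + 1))) :=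
  ⋂ u ∈ downDirs n, {x | ⟪u, x⟫ ≤ suppFn K u}

/-- The convex function whose graph is the lower boundary of `S(K)`. -/
def fK {n : ℕ} (K : Set (EuclideanSpace ℝ (Fin (n + 1)))) (y : EuclideanSpace ℝ (Fin n)) : ℝ :=
  sInf {t : ℝ | vlift n y t ∈ SK K}

/-- `K↓ ⊕ α`: points of `ℝ^{d-1}` within distance `α` of the vertical projection of `K`. -/
def Koplus {n : ℕ} (K : Set (EuclideanSpace ℝ (Fin (n + 1)))) (α : ℝ) :
    Set (EuclideanSpace ℝ (Fin n)) :=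
  {y | Metric.infDist y (vproj n '' K) ≤ α}

/-- The `α`-restricted support set `K^{(α)}`. -/
def Krestr {n : ℕ} (K : Set (EuclideanSpace ℝ (Fin (n + 1)))) (α : ℝ) :
    Set (EuclideanSpace ℝ (Fin (n + 1))) :=
  SK K ∩ {x | vproj n x ∈ Koplus K α}

/-- The lower boundary `∂̄K^{(α)}` of the restricted support set. -/
def lowerBdry {n : ℕ} (K : Set (EuclideanSpace ℝ (Fin (n + 1)))) (α : ℝ) :
    Set (EuclideanSpace ℝ (Fin (n + 1))) :=
  (fun y => vlift n y (fK K y)) '' Koplus K α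

/-- The base of the `ε`-dual cap of `K^{(2ε)}` induced by the point `q` and
outward normal `u`. -/
def DBase {n : ℕ} (K : Set (EuclideanSpace ℝ (Fin (n + 1)))) (ε : ℝ)
    (q u : EuclideanSpace ℝ (Fin (n + 1))) : Set (EuclideanSpace ℝ (Fin (n + 1))) :=
  {x | ⟪u, x - q⟫ = 0} ∩ closure (convexHull ℝ (Krestr K (2 * ε) ∪ {q - ε • ed n}))

/-- The projective dual of a U-shaped closed convex set. -/
def Udual {n : ℕ} (U : Set (EuclideanSpace ℝ (Fin (n + 1)))) :
    Set (EuclideanSpace ℝ (Fin (n + 1))) :=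
  {y | ∀ z ∈ U, ⟪vproj n y, vproj n z⟫ - z (Fin.last n) ≤ y (Fin.last n)}


namespace FKAux
variable {n : ℕ}

lemma inner_euc (u x : EuclideanSpace ℝ (Fin (n + 1))) : ⟪u, x⟫ = ∑ i, u i * x i := by
  simp [PiLp.inner_apply, RCLike.inner_apply, mul_comm]

lemma vlift_castSucc (y : EuclideanSpace ℝ (Fin n)) (t : ℝ) (j : Fin n) :
    vlift n y t j.castSucc = y j := by simp [vlift]

lemma vlift_last (y : EuclideanSpace ℝ (Fin n)) (t : ℝ) :
    vlift n y t (Fin.last n) = t := by simp [vlift]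

lemma inner_vlift (u : EuclideanSpace ℝ (Fin (n + 1))) (y : EuclideanSpace ℝ (Fin n)) (t : ℝ) :
    ⟪u, vlift n y t⟫ = (∑ j, u j.castSucc * y j) + u (Fin.last n) * t := by
  rw [inner_euc, Fin.sum_univ_castSucc]
  simp [vlift_castSucc, vlift_last]

lemma sum_bound {u : EuclideanSpace ℝ (Fin (n + 1))} (hu : u ∈ downDirs n)
    (w : EuclideanSpace ℝ (Fin n)) :
    |∑ j, u j.castSucc * w j| ≤ (-u (Fin.last n)) * ∑ j, |w j| := by
  calc |∑ j, u j.castSucc * w j| ≤ ∑ j, |u j.castSucc * w j| :=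
        Finset.abs_sum_le_sum_abs _ _
    _ ≤ ∑ j, (-u (Fin.last n)) * |w j| := by
        refine Finset.sum_le_sum fun j _ => ?_
        rw [abs_mul]
        exact mul_le_mul_of_nonneg_right (hu.2 j) (abs_nonneg _)
    _ = _ := (Finset.mul_sum _ _ _).symm

lemma mem_SK {K : Set (EuclideanSpace ℝ (Fin (n + 1)))} {x : EuclideanSpace ℝ (Fin (n + 1))} :
    x ∈ SK K ↔ ∀ u ∈ downDirs n, ⟪u, x⟫ ≤ suppFn K u := by
  simp [SK]

lemma inner_le_suppFn {K : Set (EuclideanSpace ℝ (Fin (n + 1)))} (hKc : IsCompact K)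
    {x : EuclideanSpace ℝ (Fin (n + 1))} (hx : x ∈ K) (u : EuclideanSpace ℝ (Fin (n + 1))) :
    ⟪u, x⟫ ≤ suppFn K u :=
  le_csSup ((hKc.image (continuous_const.inner continuous_id)).bddAbove) ⟨x, hx, rfl⟩

lemma step {K : Set (EuclideanSpace ℝ (Fin (n + 1)))} {u : EuclideanSpace ℝ (Fin (n + 1))}
    (hu : u ∈ downDirs n) (y y' : EuclideanSpace ℝ (Fin n)) (t : ℝ)
    (h : ⟪u, vlift n y' t⟫ ≤ suppFn K u) :
    ⟪u, vlift n y (t + ∑ j, |y j - y' j|)⟫ ≤ suppFn K u := by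
  rw [inner_vlift] at h ⊢
  have h1 : |∑ j, u j.castSucc * (y j - y' j)| ≤ (-u (Fin.last n)) * ∑ j, |y j - y' j| :=
    by simpa using sum_bound hu (y - y')
  have h2 : ∑ j, u j.castSucc * (y j - y' j)
      = (∑ j, u j.castSucc * y j) - ∑ j, u j.castSucc * y' j := by
    simp [mul_sub, Finset.sum_sub_distrib]
  have h3 := (abs_le.mp h1).2
  rw [h2] at h3
  nlinarith [h3, h]

lemma vlift_vproj (x : EuclideanSpace ℝ (Fin (n + 1))) :
    vlift n (vproj n x) (x (Fin.last n)) = x := by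
  ext i
  by_cases h : (i : ℕ) < n
  · simp only [vlift, vproj, WithLp.ofLp_toLp (p := 2), dif_pos h]
    rfl
  · have hi : i = Fin.last n := by
      have := i.isLt
      exact Fin.ext (by simp only [Fin.val_last]; omega)
    subst hi
    simp [vlift]

lemma vlift_smul (a : ℝ) (y : EuclideanSpace ℝ (Fin n)) (t : ℝ) :
    a • vlift n y t = vlift n (a • y) (a * t) := by
  ext i
  by_cases h : (i : ℕ) < n <;> simp [vlift, h, PiLp.smul_apply, smul_eq_mul]

lemma vlift_add (y y' : EuclideanSpace ℝ (Fin n)) (t t' : ℝ) :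
    vlift n y t + vlift n y' t' = vlift n (y + y') (t + t') := by
  ext i
  by_cases h : (i : ℕ) < n <;> simp [vlift, h, PiLp.add_apply]

lemma ed_mem_downDirs : -(ed n) ∈ downDirs n := by
  constructor
  · simp [ed]
  · intro j
    simp [ed, EuclideanSpace.single_apply, (Fin.castSucc_lt_last j).ne]

end FKAux

open FKAux in
/-- for every convex body `K ⊆ ℝ^d` (`d = n + 1 ≥ 2`), the function `f_K`
is convex and 1-Lipschitz with respect to the ℓ¹-norm. -/
theorem fK_convex_and_l1_lipschitz (n : ℕ) (hn : 1 ≤ n)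
    (K : Set (EuclideanSpace ℝ (Fin (n + 1))))
    (hKc : IsCompact K) (hKconv : Convex ℝ K) (hKint : (interior K).Nonempty) :
    ConvexOn ℝ Set.univ (fK K) ∧
    ∀ y y' : EuclideanSpace ℝ (Fin n), |fK K y - fK K y'| ≤ ∑ j, |y j - y' j| := by
  obtain ⟨x₀, hx₀'⟩ := hKint
  have hx₀ : x₀ ∈ K := interior_subset hx₀'
  -- nonemptiness of the epigraph fibers
  have hTne : ∀ y : EuclideanSpace ℝ (Fin n), {t : ℝ | vlift n y t ∈ SK K}.Nonempty := by
    intro y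
    refine ⟨x₀ (Fin.last n) + ∑ j, |y j - vproj n x₀ j|, ?_⟩
    rw [Set.mem_setOf_eq, mem_SK]
    intro u hu
    apply step hu
    rw [vlift_vproj]
    exact inner_le_suppFn hKc hx₀ u
  -- bounded below
  have hTbdd : ∀ y : EuclideanSpace ℝ (Fin n), BddBelow {t : ℝ | vlift n y t ∈ SK K} := by
    intro y
    refine ⟨-suppFn K (-(ed n)), fun t ht => ?_⟩
    have h := mem_SK.mp ht (-(ed n)) ed_mem_downDirs
    rw [inner_vlift] at h
    have h1 : ∀ j : Fin n, (-(ed n)) j.castSucc = 0 := by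
      intro j
      simp [ed, EuclideanSpace.single_apply, (Fin.castSucc_lt_last j).ne]
    have h2 : (-(ed n)) (Fin.last n) = -1 := by simp [ed]
    simp only [h2] at h
    rw [Finset.sum_congr rfl fun j _ => by rw [h1 j, zero_mul]] at h
    simp at h
    linarith
  -- closedness
  have hSKclosed : IsClosed (SK K) :=
    isClosed_biInter fun u hu => isClosed_le (continuous_const.inner continuous_id)
      continuous_const
  have hvcont : ∀ y : EuclideanSpace ℝ (Fin n), Continuous fun t => vlift n y t := by
    intro y
    have heq : (fun t => vlift n y t) = fun t : ℝ => vlift n y 0 + t • ed n := by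
      funext t
      ext i
      by_cases h : (i : ℕ) < n
      · have : ed n i = 0 := by
          have : i ≠ Fin.last n := by
            intro hh; rw [hh] at h; simp at h
          simp [ed, EuclideanSpace.single_apply, this]
        simp [vlift, h, PiLp.add_apply, PiLp.smul_apply, this]
      · have hi : i = Fin.last n := by
          have := i.isLt
          exact Fin.ext (by simp only [Fin.val_last]; omega)
        subst hi
        simp [vlift, ed, PiLp.add_apply, PiLp.smul_apply]
    rw [heq]
    exact continuous_const.add (continuous_id.smul continuous_const)
  have hTclosed : ∀ y : EuclideanSpace ℝ (Fin n), IsClosed {t : ℝ | vlift n y t ∈ SK K} :=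
    fun y => hSKclosed.preimage (hvcont y)
  have hfmem : ∀ y : EuclideanSpace ℝ (Fin n), vlift n y (fK K y) ∈ SK K :=
    fun y => (hTclosed y).csInf_mem (hTne y) (hTbdd y)
  -- convexity of SK
  have hSKconv : Convex ℝ (SK K) := by
    refine convex_iInter₂ fun u hu => ?_
    exact convex_halfSpace_le
      ⟨fun a b => inner_add_right _ _ _, fun c a => real_inner_smul_right _ _ _⟩ _
  constructor
  · refine ⟨convex_univ, fun y _ y' _ a b ha hb hab => ?_⟩
    have hmem := hSKconv (hfmem y) (hfmem y') ha hb hab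
    rw [vlift_smul, vlift_smul, vlift_add] at hmem
    have := csInf_le (hTbdd (a • y + b • y')) hmem
    simpa [smul_eq_mul, fK] using this
  · have key : ∀ z z' : EuclideanSpace ℝ (Fin n),
        fK K z ≤ fK K z' + ∑ j, |z j - z' j| := by
      intro z z'
      refine csInf_le (hTbdd z) ?_
      rw [Set.mem_setOf_eq, mem_SK]
      intro u hu
      exact step hu z z' _ (mem_SK.mp (hfmem z') u hu)
    intro y y'
    rw [abs_sub_le_iff]
    have hsymm : ∑ j, |y' j - y j| = ∑ j, |y j - y' j| := by
      simp [abs_sub_comm]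
    constructor
    · linarith [key y y']
    · have := key y' y
      linarith

end
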